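/- Let p, q ∈ ℝ² and r > 0, and let a ∈ ℝ² with d(q,a) = r. Define b = p + q − a (so that p − b = a − q). Then for every x ∈ ℝ² with d(p,x) = r and x ≠ b, the lines ℓ_{p,a} and ℓ_{x,q} in ℝ³ intersect, while ℓ_{p,a} and ℓ_{b,q} do not intersect. -/

import Mathlib

/-- The line `ℓ_{p,q} ⊂ ℝ³`. -/
def lpq (p q : ℝ × ℝ) : Set (ℝ × ℝ × ℝ) :=
  {v | ∃ t : ℝ, v = ((p.1 + q.1) / 2 + t * (q.2 - p.2) / 2,
                     (p.2 + q.2) / 2 + t * (p.1 - q.1) / 2, t)}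

lemma aux_inter (p q a x : ℝ × ℝ) (t : ℝ)
    (h1 : (p.1 + a.1 - x.1 - q.1) + t * (a.2 + x.2 - p.2 - q.2) = 0)
    (h2 : (p.2 + a.2 - x.2 - q.2) + t * (p.1 + q.1 - a.1 - x.1) = 0) :
    (lpq p a ∩ lpq x q).Nonempty := by
  refine ⟨((p.1 + a.1) / 2 + t * (a.2 - p.2) / 2,
      (p.2 + a.2) / 2 + t * (p.1 - a.1) / 2, t), ⟨t, rfl⟩, ⟨t, ?_⟩⟩
  have e1 : (p.1 + a.1) / 2 + t * (a.2 - p.2) / 2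
      = (x.1 + q.1) / 2 + t * (q.2 - x.2) / 2 := by linear_combination h1 / 2
  have e2 : (p.2 + a.2) / 2 + t * (p.1 - a.1) / 2
      = (x.2 + q.2) / 2 + t * (x.1 - q.1) / 2 := by linear_combination h2 / 2
  rw [e1, e2]

/-- Let `d(q,a) = r > 0` and `b = p + q − a`. For every `x` with `d(p,x) = r` and
`x ≠ b`, the lines `ℓ_{p,a}` and `ℓ_{x,q}` intersect, while `ℓ_{p,a}` and `ℓ_{b,q}`
do not. -/
theorem stmt_18 (p q a : ℝ × ℝ) (r : ℝ) (hr : 0 < r)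
    (ha : (q.1 - a.1) ^ 2 + (q.2 - a.2) ^ 2 = r ^ 2)
    (b : ℝ × ℝ) (hb : b = (p.1 + q.1 - a.1, p.2 + q.2 - a.2)) :
    (∀ x : ℝ × ℝ, (p.1 - x.1) ^ 2 + (p.2 - x.2) ^ 2 = r ^ 2 → x ≠ b →
      (lpq p a ∩ lpq x q).Nonempty) ∧
    lpq p a ∩ lpq b q = ∅ := by
  constructor
  · intro x hx hxb
    have key : (p.1 + a.1 - x.1 - q.1) * (p.1 + q.1 - a.1 - x.1)
        = (p.2 + a.2 - x.2 - q.2) * (a.2 + x.2 - p.2 - q.2) := by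
      linear_combination hx - ha
    by_cases hC0 : (a.2 + x.2 - p.2 - q.2) = 0
    · have hD0 : (p.1 + q.1 - a.1 - x.1) ≠ 0 := by
        intro hD
        apply hxb
        rw [hb]
        have : x.1 = p.1 + q.1 - a.1 := by linarith
        have : x.2 = p.2 + q.2 - a.2 := by linarith
        exact Prod.ext ‹x.1 = _› ‹x.2 = _›
      have hA0 : p.1 + a.1 - x.1 - q.1 = 0 := by
        rw [hC0, mul_zero] at key
        exact (mul_eq_zero.mp key).resolve_right hD0
      refine aux_inter p q a x (-(p.2 + a.2 - x.2 - q.2) / (p.1 + q.1 - a.1 - x.1)) ?_ ?_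
      · rw [hC0, hA0]; ring
      · field_simp; ring
    · refine aux_inter p q a x (-(p.1 + a.1 - x.1 - q.1) / (a.2 + x.2 - p.2 - q.2)) ?_ ?_
      · field_simp; ring
      · field_simp
        linear_combination -key
  · ext v
    simp only [Set.mem_inter_iff, Set.mem_empty_iff_false, iff_false]
    rintro ⟨⟨t, ht⟩, ⟨s, hs⟩⟩
    rw [ht, hb] at hs
    simp only [Prod.mk.injEq] at hs
    obtain ⟨h1, h2, h3⟩ := hs
    subst h3
    have ha1 : a.1 = q.1 := by linarith
    have ha2 : a.2 = q.2 := by linarith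
    rw [ha1, ha2] at ha
    nlinarith [hr]
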